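/- Commitment value of the Traveler's Dilemma: In the Traveler's Dilemma, the highest leader payoff equals α^H = 295/3 (= 98⅓). Moreover, the mixed strategy x^L placing probability 1/3 on each of the pure strategies 97, 99 and 100 satisfies: the pure strategy 99 of player II is a best reply to x^L (99 ∈ BR_II(x^L)), the leader's payoff is α(x^L, e_{99}) = 295/3, and the follower's payoff is β(x^L, e_{99}) = 295/3. -/
import Mathlib


open Matrix

noncomputable section

/-- The set of mixed strategies: the standard simplex in `ℝ^m`. -/
def Simp (m : ℕ) : Set (Fin m → ℝ) := stdSimplex ℝ (Fin m)

/-- Bilinear payoff `xᵀ A y`. -/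
def pay {m n : ℕ} (A : Matrix (Fin m) (Fin n) ℝ) (x : Fin m → ℝ) (y : Fin n → ℝ) : ℝ :=
  x ⬝ᵥ A.mulVec y

/-- Payoff of a mixed strategy `x` against the pure strategy `j`: `α(x, e_j) = (xᵀA)_j`. -/
def purePay {m n : ℕ} (A : Matrix (Fin m) (Fin n) ℝ) (x : Fin m → ℝ) (j : Fin n) : ℝ :=
  Matrix.vecMul x A j

/-- Pure best replies of player II against `x`. -/
def BRII {m n : ℕ} (B : Matrix (Fin m) (Fin n) ℝ) (x : Fin m → ℝ) : Set (Fin n) :=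
  {j | ∀ k, purePay B x k ≤ purePay B x j}

/-- Best-reply region `X(j)` of column `j`. -/
def XReg {m n : ℕ} (B : Matrix (Fin m) (Fin n) ℝ) (j : Fin n) : Set (Fin m → ℝ) :=
  {x ∈ Simp m | j ∈ BRII B x}

/-- `D`: columns whose best-reply region has a fully mixed point. -/
def Dset {m n : ℕ} (B : Matrix (Fin m) (Fin n) ℝ) : Set (Fin n) :=
  {j | ∃ x ∈ XReg B j, ∀ i, 0 < x i}

/-- `E(j)`: columns of `B` payoff-equivalent to column `j`. -/
def Ecols {m n : ℕ} (B : Matrix (Fin m) (Fin n) ℝ) (j : Fin n) : Set (Fin n) :=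
  {k | ∀ i, B i k = B i j}

/-- `min_j α(x, e_j)`. -/
def minPure {m n : ℕ} (A : Matrix (Fin m) (Fin n) ℝ) (x : Fin m → ℝ) : ℝ :=
  sInf {w | ∃ j, w = purePay A x j}

/-- `max_j α(x, e_j)`. -/
def maxPure {m n : ℕ} (A : Matrix (Fin m) (Fin n) ℝ) (x : Fin m → ℝ) : ℝ :=
  sSup {w | ∃ j, w = purePay A x j}

/-- `max_{j ∈ BR_II(x)} α(x, e_j)`. -/
def maxBR {m n : ℕ} (A B : Matrix (Fin m) (Fin n) ℝ) (x : Fin m → ℝ) : ℝ :=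
  sSup {w | ∃ j ∈ BRII B x, w = purePay A x j}

/-- Matrix game value `v_A = max_{x ∈ X} min_j α(x, e_j)`. -/
def matVal {m n : ℕ} (A : Matrix (Fin m) (Fin n) ℝ) : ℝ :=
  sSup {v | ∃ x ∈ Simp m, v = minPure A x}

/-- `min_{k ∈ E(j)} α(x, e_k)`. -/
def minE {m n : ℕ} (A B : Matrix (Fin m) (Fin n) ℝ) (j : Fin n) (x : Fin m → ℝ) : ℝ :=
  sInf {w | ∃ k ∈ Ecols B j, w = purePay A x k}

/-- Commitment value `α^L = max_{j∈D} max_{x∈X(j)} min_{k∈E(j)} α(x,e_k)`. -/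
def alphaL {m n : ℕ} (A B : Matrix (Fin m) (Fin n) ℝ) : ℝ :=
  sSup {v | ∃ j ∈ Dset B, ∃ x ∈ XReg B j, v = minE A B j x}

/-- Highest leader payoff `α^H = max_{j : X(j)≠∅} max_{x∈X(j)} α(x,e_j)`. -/
def alphaH {m n : ℕ} (A B : Matrix (Fin m) (Fin n) ℝ) : ℝ :=
  sSup {v | ∃ j, ∃ x ∈ XReg B j, v = purePay A x j}

/-- Commitment optimal strategies of the leader (player I). -/
def XLset {m n : ℕ} (A B : Matrix (Fin m) (Fin n) ℝ) : Set (Fin m → ℝ) :=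
  {x | ∃ j ∈ Dset B, x ∈ XReg B j ∧ minE A B j x = alphaL A B}

/-- Non-degeneracy for player I: no mixed strategy of player I has more pure best
replies (among player II's pure strategies) than the size of its support. -/
def NondegFor {m n : ℕ} (B : Matrix (Fin m) (Fin n) ℝ) : Prop :=
  ∀ x ∈ Simp m, (BRII B x).ncard ≤ {i | x i ≠ 0}.ncard

/-- Nash equilibrium of the bimatrix game `(A,B)`. -/
def isNE {m n : ℕ} (A B : Matrix (Fin m) (Fin n) ℝ) (x : Fin m → ℝ) (y : Fin n → ℝ) : Prop :=
  x ∈ Simp m ∧ y ∈ Simp n ∧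
  (∀ x' ∈ Simp m, pay A x' y ≤ pay A x y) ∧
  (∀ y' ∈ Simp n, pay B x y' ≤ pay B x y)

/-- Strategies of player I appearing in some Nash equilibrium. -/
def NEX {m n : ℕ} (A B : Matrix (Fin m) (Fin n) ℝ) : Set (Fin m → ℝ) :=
  {x | ∃ y, isNE A B x y}

/-- Strategies of player II appearing in some Nash equilibrium. -/
def NEY {m n : ℕ} (A B : Matrix (Fin m) (Fin n) ℝ) : Set (Fin n → ℝ) :=
  {y | ∃ x, isNE A B x y}

/-- Weakly unilaterally competitive bimatrix game. -/
def WUC {m n : ℕ} (A B : Matrix (Fin m) (Fin n) ℝ) : Prop :=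
  (∀ x₁ ∈ Simp m, ∀ x₂ ∈ Simp m, ∀ y ∈ Simp n,
    (pay A x₁ y > pay A x₂ y → pay B x₁ y ≤ pay B x₂ y) ∧
    (pay A x₁ y = pay A x₂ y → pay B x₁ y = pay B x₂ y)) ∧
  (∀ y₁ ∈ Simp n, ∀ y₂ ∈ Simp n, ∀ x ∈ Simp m,
    (pay B x y₁ > pay B x y₂ → pay A x y₁ ≤ pay A x y₂) ∧
    (pay B x y₁ = pay B x y₂ → pay A x y₁ = pay A x y₂))

/-- Traveler's Dilemma payoff of the row player choosing `i` against `j`,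
for `i, j ∈ {2,…,100}`. -/
def trdPay (i j : ℕ) : ℝ :=
  if i < j then (i : ℝ) + 2 else if i = j then (i : ℝ) else (j : ℝ) - 2

/-- Player I's payoff matrix in the Traveler's Dilemma; strategy `i : Fin 99`
represents the claim `i + 2 ∈ {2,…,100}`. -/
def TrA : Matrix (Fin 99) (Fin 99) ℝ :=
  Matrix.of fun i j => trdPay (i.val + 2) (j.val + 2)

/-- Player II's payoff matrix in the Traveler's Dilemma. -/
def TrB : Matrix (Fin 99) (Fin 99) ℝ :=
  Matrix.of fun i j => trdPay (j.val + 2) (i.val + 2)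

/-- The leader's commitment optimal strategy in the Traveler's Dilemma: probability
`1/3` on each of the claims `97`, `99` and `100` (indices `95`, `97`, `98`). -/
def trdXL : Fin 99 → ℝ :=
  fun i => if i.val = 95 ∨ i.val = 97 ∨ i.val = 98 then 1 / 3 else 0

/-- in the Traveler's Dilemma, the highest leader payoff is
`α^H = 295/3 = 98⅓`; moreover, for the mixed strategy `x^L` putting weight `1/3` on
each of `97`, `99`, `100`, the claim `99` (index `97`) is a pure best reply of the
follower, and both the leader's and the follower's payoffs equal `295/3`. -/

-- ===== auxiliary lemmas =====

lemma purePay_eq {m n : ℕ} (A : Matrix (Fin m) (Fin n) ℝ) (x : Fin m → ℝ) (j : Fin n) :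
    purePay A x j = ∑ i, x i * A i j := by
  simp [purePay, Matrix.vecMul, dotProduct]

lemma trdPay_of_lt {a b : ℕ} (h : a < b) : trdPay a b = (a:ℝ) + 2 := if_pos h

lemma trdPay_of_eq (a : ℕ) : trdPay a a = (a:ℝ) := by simp [trdPay]

lemma trdPay_of_gt {a b : ℕ} (h : b < a) : trdPay a b = (b:ℝ) - 2 := by
  unfold trdPay
  rw [if_neg (by omega), if_neg (by omega)]

lemma trdPay_le_98 {a b : ℕ} (hb : b ≤ 97) : trdPay a b ≤ 98 := by
  rcases lt_trichotomy a b with h|h|h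
  · rw [trdPay_of_lt h]
    have : (a:ℝ) ≤ 96 := by exact_mod_cast (by omega : a ≤ 96)
    linarith
  · subst h
    rw [trdPay_of_eq]
    have : (a:ℝ) ≤ 97 := by exact_mod_cast hb
    linarith
  · rw [trdPay_of_gt h]
    have : (b:ℝ) ≤ 97 := by exact_mod_cast hb
    linarith

lemma coeff98 (a : ℕ) (h2 : 2 ≤ a) (h100 : a ≤ 100) :
    trdPay a 98 ≤ 295/3 + (2/3)*(trdPay 97 a - trdPay 98 a)
      + (1/3)*(trdPay 96 a - trdPay 98 a) := by
  rcases le_or_gt a 95 with h | h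
  · rw [trdPay_of_lt (by omega), trdPay_of_gt (show a < 97 by omega),
      trdPay_of_gt (show a < 98 by omega), trdPay_of_gt (show a < 96 by omega)]
    have : (a:ℝ) ≤ 95 := by exact_mod_cast h
    linarith
  · interval_cases a <;> norm_num [trdPay]

lemma coeff99 (a : ℕ) (h2 : 2 ≤ a) (h100 : a ≤ 100) :
    trdPay a 99 ≤ 295/3 + (2/3)*(trdPay 98 a - trdPay 99 a)
      + (1/3)*(trdPay 97 a - trdPay 99 a) := by
  rcases le_or_gt a 96 with h | h
  · rw [trdPay_of_lt (by omega), trdPay_of_gt (show a < 98 by omega),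
      trdPay_of_gt (show a < 99 by omega), trdPay_of_gt (show a < 97 by omega)]
    have : (a:ℝ) ≤ 96 := by exact_mod_cast h
    linarith
  · interval_cases a <;> norm_num [trdPay]

lemma dcol99 (a : ℕ) (h2 : 2 ≤ a) (h100 : a ≤ 100) :
    0 ≤ trdPay 99 a - trdPay 100 a := by
  rcases le_or_gt a 98 with h | h
  · rw [trdPay_of_gt (show a < 99 by omega), trdPay_of_gt (show a < 100 by omega)]
    norm_num
  · interval_cases a <;> norm_num [trdPay]

lemma dcol98 (a : ℕ) (h2 : 2 ≤ a) (h100 : a ≤ 100) :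
    0 ≤ trdPay 98 a - trdPay 100 a := by
  rcases le_or_gt a 97 with h | h
  · rw [trdPay_of_gt (show a < 98 by omega), trdPay_of_gt (show a < 100 by omega)]
    norm_num
  · interval_cases a <;> norm_num [trdPay]

lemma dcol97 (a : ℕ) (h2 : 2 ≤ a) (h99 : a ≤ 99) :
    0 ≤ trdPay 97 a - trdPay 100 a := by
  rcases le_or_gt a 96 with h | h
  · rw [trdPay_of_gt (show a < 97 by omega), trdPay_of_gt (show a < 100 by omega)]
    norm_num
  · interval_cases a <;> norm_num [trdPay]

lemma cert (j k1 k2 : Fin 99) (x : Fin 99 → ℝ) (hpos : ∀ i, 0 ≤ x i)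
    (hsum : ∑ i, x i = 1)
    (h1 : purePay TrB x k1 ≤ purePay TrB x j)
    (h2 : purePay TrB x k2 ≤ purePay TrB x j)
    (hco : ∀ i : Fin 99,
      TrA i j ≤ 295/3 + (2/3)*(TrB i k1 - TrB i j) + (1/3)*(TrB i k2 - TrB i j)) :
    purePay TrA x j ≤ 295/3 := by
  simp only [purePay_eq] at h1 h2 ⊢
  have step : ∑ i, x i * TrA i j
      ≤ ∑ i, x i * (295/3 + (2/3)*(TrB i k1 - TrB i j) + (1/3)*(TrB i k2 - TrB i j)) :=
    Finset.sum_le_sum fun i _ => mul_le_mul_of_nonneg_left (hco i) (hpos i)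
  have expand : ∑ i, x i * (295/3 + (2/3)*(TrB i k1 - TrB i j) + (1/3)*(TrB i k2 - TrB i j))
      = (295/3) * (∑ i, x i)
        + (2/3)*((∑ i, x i * TrB i k1) - ∑ i, x i * TrB i j)
        + (1/3)*((∑ i, x i * TrB i k2) - ∑ i, x i * TrB i j) := by
    simp only [Finset.mul_sum, mul_sub, ← Finset.sum_sub_distrib, ← Finset.sum_add_distrib]
    exact Finset.sum_congr rfl fun i _ => by ring
  rw [expand, hsum] at step
  linarith

lemma case100 (x : Fin 99 → ℝ) (hpos : ∀ i, 0 ≤ x i) (hsum : ∑ i, x i = 1)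
    (hbr : ∀ k, purePay TrB x k ≤ purePay TrB x ⟨98, by norm_num⟩) :
    purePay TrA x ⟨98, by norm_num⟩ ≤ 295/3 := by
  have zero_of : ∀ k : Fin 99,
      (∀ i : Fin 99, 0 ≤ x i * (TrB i k - TrB i ⟨98, by norm_num⟩)) →
      ∀ i : Fin 99, x i * (TrB i k - TrB i ⟨98, by norm_num⟩) = 0 := by
    intro k hnn i
    have hle := hbr k
    rw [purePay_eq, purePay_eq] at hle
    have hsle : ∑ i, x i * (TrB i k - TrB i ⟨98, by norm_num⟩) ≤ 0 := by
      have : ∑ i, x i * (TrB i k - TrB i ⟨98, by norm_num⟩)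
          = (∑ i, x i * TrB i k) - ∑ i, x i * TrB i ⟨98, by norm_num⟩ := by
        rw [← Finset.sum_sub_distrib]
        exact Finset.sum_congr rfl fun i _ => by ring
      rw [this]
      linarith
    have hall := (Finset.sum_eq_zero_iff_of_nonneg (fun i _ => hnn i)).mp
      (le_antisymm hsle (Finset.sum_nonneg fun i _ => hnn i))
    exact hall i (Finset.mem_univ i)
  have z1 := zero_of ⟨97, by norm_num⟩ (fun i =>
    mul_nonneg (hpos i) (dcol99 (i.1+2) (by omega) (by have := i.isLt; omega)))
  have hx97 : x ⟨97, by norm_num⟩ = 0 := by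
    have h := z1 ⟨97, by norm_num⟩
    have e : TrB (⟨97, by norm_num⟩ : Fin 99) (⟨97, by norm_num⟩ : Fin 99)
        - TrB (⟨97, by norm_num⟩ : Fin 99) (⟨98, by norm_num⟩ : Fin 99) = 2 := by
      norm_num [TrB, Matrix.of_apply, trdPay]
    rw [e] at h
    linarith
  have hx98 : x ⟨98, by norm_num⟩ = 0 := by
    have h := z1 ⟨98, by norm_num⟩
    have e : TrB (⟨98, by norm_num⟩ : Fin 99) (⟨97, by norm_num⟩ : Fin 99)
        - TrB (⟨98, by norm_num⟩ : Fin 99) (⟨98, by norm_num⟩ : Fin 99) = 1 := by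
      norm_num [TrB, Matrix.of_apply, trdPay]
    rw [e] at h
    linarith
  have z2 := zero_of ⟨96, by norm_num⟩ (fun i =>
    mul_nonneg (hpos i) (dcol98 (i.1+2) (by omega) (by have := i.isLt; omega)))
  have hx96 : x ⟨96, by norm_num⟩ = 0 := by
    have h := z2 ⟨96, by norm_num⟩
    have e : TrB (⟨96, by norm_num⟩ : Fin 99) (⟨96, by norm_num⟩ : Fin 99)
        - TrB (⟨96, by norm_num⟩ : Fin 99) (⟨98, by norm_num⟩ : Fin 99) = 2 := by
      norm_num [TrB, Matrix.of_apply, trdPay]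
    rw [e] at h
    linarith
  have z3 := zero_of ⟨95, by norm_num⟩ (by
    intro i
    by_cases h : i.1 = 98
    · have hi : i = ⟨98, by norm_num⟩ := Fin.ext h
      rw [hi, hx98, zero_mul]
    · exact mul_nonneg (hpos i) (dcol97 (i.1+2) (by omega) (by have := i.isLt; omega)))
  have hx95 : x ⟨95, by norm_num⟩ = 0 := by
    have h := z3 ⟨95, by norm_num⟩
    have e : TrB (⟨95, by norm_num⟩ : Fin 99) (⟨95, by norm_num⟩ : Fin 99)
        - TrB (⟨95, by norm_num⟩ : Fin 99) (⟨98, by norm_num⟩ : Fin 99) = 2 := by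
      norm_num [TrB, Matrix.of_apply, trdPay]
    rw [e] at h
    linarith
  rw [purePay_eq]
  have hpt : ∀ i : Fin 99, x i * TrA i ⟨98, by norm_num⟩ ≤ x i * (295/3) := by
    intro i
    rcases lt_or_ge i.1 95 with h | h
    · refine mul_le_mul_of_nonneg_left ?_ (hpos i)
      show trdPay (i.1+2) 100 ≤ 295/3
      rw [trdPay_of_lt (by omega)]
      have : (i.1:ℝ) ≤ 94 := by exact_mod_cast (by omega : i.1 ≤ 94)
      push_cast
      linarith
    · have hx0 : x i = 0 := by
        have h9 : i.1 ≤ 98 := by have := i.isLt; omega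
        rcases (by omega : i.1 = 95 ∨ i.1 = 96 ∨ i.1 = 97 ∨ i.1 = 98) with h|h|h|h
        · rw [show i = ⟨95, by norm_num⟩ from Fin.ext h]; exact hx95
        · rw [show i = ⟨96, by norm_num⟩ from Fin.ext h]; exact hx96
        · rw [show i = ⟨97, by norm_num⟩ from Fin.ext h]; exact hx97
        · rw [show i = ⟨98, by norm_num⟩ from Fin.ext h]; exact hx98
      rw [hx0, zero_mul, zero_mul]
  calc ∑ i, x i * TrA i ⟨98, by norm_num⟩ ≤ ∑ i, x i * (295/3) :=
        Finset.sum_le_sum fun i _ => hpt i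
    _ = 295/3 := by rw [← Finset.sum_mul, hsum, one_mul]

lemma trd_upper (j : Fin 99) (x : Fin 99 → ℝ) (hxs : x ∈ Simp 99)
    (hbr : ∀ k, purePay TrB x k ≤ purePay TrB x j) :
    purePay TrA x j ≤ 295/3 := by
  obtain ⟨hpos, hsum⟩ := hxs
  rcases lt_or_ge j.1 96 with hj | hj
  · rw [purePay_eq]
    have hpt : ∀ i : Fin 99, x i * TrA i j ≤ x i * (295/3) := by
      intro i
      refine mul_le_mul_of_nonneg_left ?_ (hpos i)
      show trdPay (i.1+2) (j.1+2) ≤ 295/3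
      have := trdPay_le_98 (a := i.1+2) (b := j.1+2) (by omega)
      linarith
    calc ∑ i, x i * TrA i j ≤ ∑ i, x i * (295/3) := Finset.sum_le_sum fun i _ => hpt i
      _ = 295/3 := by rw [← Finset.sum_mul, hsum, one_mul]
  · have hj99 : j.1 ≤ 98 := by have := j.isLt; omega
    rcases (by omega : j.1 = 96 ∨ j.1 = 97 ∨ j.1 = 98) with h|h|h
    · rw [show j = ⟨96, by norm_num⟩ from Fin.ext h] at hbr ⊢
      refine cert _ ⟨95, by norm_num⟩ ⟨94, by norm_num⟩ x hpos hsum (hbr _) (hbr _) ?_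
      intro i
      exact coeff98 (i.1+2) (by omega) (by have := i.isLt; omega)
    · rw [show j = ⟨97, by norm_num⟩ from Fin.ext h] at hbr ⊢
      refine cert _ ⟨96, by norm_num⟩ ⟨95, by norm_num⟩ x hpos hsum (hbr _) (hbr _) ?_
      intro i
      exact coeff99 (i.1+2) (by omega) (by have := i.isLt; omega)
    · rw [show j = ⟨98, by norm_num⟩ from Fin.ext h] at hbr ⊢
      exact case100 x hpos hsum hbr

lemma sumXL (f : Fin 99 → ℝ) :
    ∑ i, trdXL i * f i
      = (f ⟨95, by norm_num⟩ + f ⟨97, by norm_num⟩ + f ⟨98, by norm_num⟩)/3 := by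
  have h : ∀ i : Fin 99, trdXL i * f i =
      if i ∈ ({⟨95, by norm_num⟩, ⟨97, by norm_num⟩, ⟨98, by norm_num⟩} : Finset (Fin 99))
      then f i / 3 else 0 := by
    intro i
    by_cases hP : i.1 = 95 ∨ i.1 = 97 ∨ i.1 = 98
    · have hm : i ∈ ({⟨95, by norm_num⟩, ⟨97, by norm_num⟩, ⟨98, by norm_num⟩} :
          Finset (Fin 99)) := by
        simp only [Finset.mem_insert, Finset.mem_singleton, Fin.ext_iff]
        exact hP
      rw [if_pos hm]
      simp only [trdXL]
      rw [if_pos hP]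
      ring
    · have hm : i ∉ ({⟨95, by norm_num⟩, ⟨97, by norm_num⟩, ⟨98, by norm_num⟩} :
          Finset (Fin 99)) := by
        simp only [Finset.mem_insert, Finset.mem_singleton, Fin.ext_iff]
        exact hP
      rw [if_neg hm]
      simp only [trdXL]
      rw [if_neg hP]
      ring
  rw [Finset.sum_congr rfl fun i _ => h i, Finset.sum_ite_mem, Finset.univ_inter,
    Finset.sum_insert (by decide), Finset.sum_insert (by decide), Finset.sum_singleton]
  ring

lemma trdXL_mem : trdXL ∈ Simp 99 := by
  constructor
  · intro i
    simp only [trdXL]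
    split_ifs <;> norm_num
  · have h := sumXL (fun _ => 1)
    simp only [mul_one] at h
    rw [h]
    norm_num

lemma purePay_B_XL (k : Fin 99) :
    purePay TrB trdXL k
      = (trdPay (k.1+2) 97 + trdPay (k.1+2) 99 + trdPay (k.1+2) 100)/3 := by
  rw [purePay_eq, sumXL]
  rfl

lemma brvalB : purePay TrB trdXL ⟨97, by norm_num⟩ = 295/3 := by
  rw [purePay_B_XL]
  norm_num [trdPay]

lemma brXL : (⟨97, by norm_num⟩ : Fin 99) ∈ BRII TrB trdXL := by
  intro k
  rw [purePay_B_XL, brvalB]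
  have h2 : 2 ≤ k.1 + 2 := by omega
  have h100 : k.1 + 2 ≤ 100 := by have := k.isLt; omega
  set a := k.1 + 2 with ha
  rcases le_or_gt a 96 with h | h
  · rw [trdPay_of_lt (show a < 97 by omega), trdPay_of_lt (show a < 99 by omega),
      trdPay_of_lt (show a < 100 by omega)]
    have : (a:ℝ) ≤ 96 := by exact_mod_cast h
    linarith
  · interval_cases a <;> norm_num [trdPay]

lemma avalA : purePay TrA trdXL ⟨97, by norm_num⟩ = 295/3 := by
  rw [purePay_eq, sumXL]
  norm_num [TrA, Matrix.of_apply, trdPay]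

theorem stmt18 :
    alphaH TrA TrB = 295 / 3 ∧
    trdXL ∈ Simp 99 ∧
    (⟨97, by norm_num⟩ : Fin 99) ∈ BRII TrB trdXL ∧
    purePay TrA trdXL ⟨97, by norm_num⟩ = 295 / 3 ∧
    purePay TrB trdXL ⟨97, by norm_num⟩ = 295 / 3 := by
  have hmem : trdXL ∈ Simp 99 := trdXL_mem
  have hbr : (⟨97, by norm_num⟩ : Fin 99) ∈ BRII TrB trdXL := brXL
  have hub : ∀ v ∈ {v | ∃ j, ∃ x ∈ XReg TrB j, v = purePay TrA x j}, v ≤ 295/3 := by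
    rintro v ⟨j, x, hx, rfl⟩
    exact trd_upper j x hx.1 hx.2
  have hne : (295:ℝ)/3 ∈ {v | ∃ j, ∃ x ∈ XReg TrB j, v = purePay TrA x j} :=
    ⟨⟨97, by norm_num⟩, trdXL, ⟨hmem, hbr⟩, avalA.symm⟩
  refine ⟨?_, hmem, hbr, avalA, brvalB⟩
  unfold alphaH
  exact le_antisymm (csSup_le ⟨_, hne⟩ hub) (le_csSup ⟨295/3, hub⟩ hne)
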